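/- With T, S disjoint subsets of blocks, T ∪ S ≠ ∅, equality Σ_{B_i∈T} x_i − Σ_{B_i∈S} x_i = 2·C(Σ_{B_i∈T} n_i, 2) + Σ_{B_j∉T∪S, B_i∈T} n_i n_j holds for a simple graph g if and only if: (i) the nodes in blocks of T form a clique in g; (ii) the nodes in blocks of S form an independent set in g; (iii) every node in a block of T is adjacent to every node in a block outside T ∪ S; and (iv) no node in a block of S is adjacent to any node in a block outside T ∪ S. -/

import Mathlib

/-- Number of nodes assigned to block `i`. -/
noncomputable def blockSize {n k : ℕ} (z : Fin n → Fin k) (i : Fin k) : ℕ := {v | z v = i}.ncard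

/-- Additive SBM sufficient statistic: total degree of the nodes in block `i`. -/
noncomputable def addStat {n k : ℕ} (z : Fin n → Fin k) (g : SimpleGraph (Fin n)) (i : Fin k) : ℕ :=
  ∑ v ∈ Finset.univ.filter (fun v => z v = i), (g.neighborSet v).ncard

open scoped Classical

lemma ncard_nbr {n : ℕ} (g : SimpleGraph (Fin n)) (v : Fin n) :
    ((g.neighborSet v).ncard : ℤ) = ∑ w, (if g.Adj v w then (1:ℤ) else 0) := by
  classical
  rw [Set.ncard_eq_toFinset_card']
  rw [show (g.neighborSet v).toFinset = Finset.univ.filter (fun w => g.Adj v w) by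
    ext w; rw [Set.mem_toFinset]; simp [SimpleGraph.neighborSet]]
  rw [Finset.card_filter]
  push_cast
  rfl

lemma blockSize_cast {n k : ℕ} (z : Fin n → Fin k) (i : Fin k) :
    ((blockSize z i : ℕ) : ℤ) = ∑ v, (if z v = i then (1:ℤ) else 0) := by
  classical
  unfold blockSize
  rw [Set.ncard_eq_toFinset_card']
  rw [show ({v | z v = i} : Set (Fin n)).toFinset = Finset.univ.filter (fun v => z v = i) by
    ext v; simp]
  rw [Finset.card_filter]
  push_cast
  rfl

lemma sum_blockSize {n k : ℕ} (z : Fin n → Fin k) (W : Finset (Fin k)) :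
    (∑ i ∈ W, (blockSize z i : ℤ)) = ∑ v, (if z v ∈ W then (1:ℤ) else 0) := by
  classical
  calc ∑ i ∈ W, (blockSize z i : ℤ)
      = ∑ i ∈ W, ∑ v, (if z v = i then (1:ℤ) else 0) :=
        Finset.sum_congr rfl fun i _ => blockSize_cast z i
    _ = ∑ v, ∑ i ∈ W, (if z v = i then (1:ℤ) else 0) := Finset.sum_comm
    _ = ∑ v, (if z v ∈ W then (1:ℤ) else 0) :=
        Finset.sum_congr rfl fun v _ => Finset.sum_ite_eq W (z v) (fun _ => (1:ℤ))

lemma sum_addStat {n k : ℕ} (z : Fin n → Fin k) (g : SimpleGraph (Fin n)) (W : Finset (Fin k)) :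
    (∑ i ∈ W, (addStat z g i : ℤ)) =
      ∑ v, (if z v ∈ W then (1:ℤ) else 0) * ∑ w, (if g.Adj v w then (1:ℤ) else 0) := by
  classical
  calc ∑ i ∈ W, (addStat z g i : ℤ)
      = ∑ i ∈ W, ∑ v ∈ Finset.univ.filter (fun v => z v = i), ((g.neighborSet v).ncard : ℤ) := by
        unfold addStat; push_cast; rfl
    _ = ∑ i ∈ W, ∑ v, (if z v = i then ((g.neighborSet v).ncard : ℤ) else 0) :=
        Finset.sum_congr rfl fun i _ => Finset.sum_filter _ _
    _ = ∑ v, ∑ i ∈ W, (if z v = i then ((g.neighborSet v).ncard : ℤ) else 0) := Finset.sum_comm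
    _ = ∑ v, (if z v ∈ W then ((g.neighborSet v).ncard : ℤ) else 0) :=
        Finset.sum_congr rfl fun v _ => Finset.sum_ite_eq W (z v) _
    _ = ∑ v, (if z v ∈ W then (1:ℤ) else 0) * ∑ w, (if g.Adj v w then (1:ℤ) else 0) := by
        refine Finset.sum_congr rfl fun v _ => ?_
        rw [ncard_nbr]
        split <;> simp

lemma two_choose_two (N : ℕ) : (2 * (N.choose 2 : ℤ)) = (N:ℤ) * N - N := by
  rcases N with _ | m
  · simp
  · have h1 : (m+1).choose 2 = (m+1) * m / 2 := by
      rw [Nat.choose_two_right]; rfl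
    have h2 : 2 * ((m+1) * m / 2) = (m+1) * m := by
      refine Nat.mul_div_cancel' ?_
      have := Nat.even_mul_succ_self m
      rw [mul_comm] at this
      exact this.two_dvd
    have h3 : (2 * (m+1).choose 2 : ℕ) = (m+1) * m := by rw [h1, h2]
    have := congrArg (fun x : ℕ => (x : ℤ)) h3
    push_cast at this ⊢
    linarith

noncomputable def cFun {n k : ℕ} (z : Fin n → Fin k) (T S : Finset (Fin k))
    (g : SimpleGraph (Fin n)) (v w : Fin n) : ℤ :=
  ((if z v ∈ T then 1 else 0) - (if z v ∈ S then 1 else 0)) * (if g.Adj v w then 1 else 0)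

noncomputable def mFun {n k : ℕ} (z : Fin n → Fin k) (T S : Finset (Fin k)) (v w : Fin n) : ℤ :=
  (if z v ∈ T then 1 else 0) * (if z w ∈ T then 1 else 0)
    - (if v = w then (if z v ∈ T then (1:ℤ) else 0) else 0)
    + (if z v ∈ T then 1 else 0) * (if z w ∉ T ∪ S then 1 else 0)

noncomputable def Hfun {n k : ℕ} (z : Fin n → Fin k) (T S : Finset (Fin k))
    (g : SimpleGraph (Fin n)) (v w : Fin n) : ℤ :=
  (mFun z T S v w - cFun z T S g v w) + (mFun z T S w v - cFun z T S g w v)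

variable {n k : ℕ} (z : Fin n → Fin k) (T S : Finset (Fin k)) (g : SimpleGraph (Fin n))

lemma Hfun_nonneg (hdisj : Disjoint T S) (v w : Fin n) :
    0 ≤ Hfun z T S g v w := by
  have hd : ∀ i, i ∈ T → i ∉ S := fun i hi => Finset.disjoint_left.mp hdisj hi
  have hsymm : g.Adj w v ↔ g.Adj v w := ⟨fun h => h.symm, fun h => h.symm⟩
  unfold Hfun mFun cFun
  by_cases hvw : v = w
  · subst hvw
    simp [Finset.mem_union, g.irrefl]
    split_ifs <;> simp_all
  · have hwv : ¬ w = v := fun h => hvw h.symm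
    simp only [Finset.mem_union, not_or, hvw, hwv, if_false, hsymm]
    split_ifs <;> simp_all <;> omega

lemma Hfun_eq_zero (hdisj : Disjoint T S)
    (h1 : ∀ u v : Fin n, z u ∈ T → z v ∈ T → u ≠ v → g.Adj u v)
    (h2 : ∀ u v : Fin n, z u ∈ S → z v ∈ S → ¬ g.Adj u v)
    (h3 : ∀ u v : Fin n, z u ∈ T → z v ∉ T ∪ S → g.Adj u v)
    (h4 : ∀ u v : Fin n, z u ∈ S → z v ∉ T ∪ S → ¬ g.Adj u v)
    (v w : Fin n) : Hfun z T S g v w = 0 := by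
  have hd : ∀ i, i ∈ T → i ∉ S := fun i hi => Finset.disjoint_left.mp hdisj hi
  have hsymm : g.Adj w v ↔ g.Adj v w := ⟨fun h => h.symm, fun h => h.symm⟩
  have h1' := h1 v w
  have h2' := h2 v w; have h3' := h3 v w; have h3'' := h3 w v
  have h4' := h4 v w; have h4'' := h4 w v
  clear h1 h2 h3 h4
  unfold Hfun mFun cFun
  by_cases hvw : v = w
  · subst hvw
    simp [Finset.mem_union, g.irrefl]
    split_ifs <;> simp_all
  · have hwv : ¬ w = v := fun h => hvw h.symm
    simp only [Finset.mem_union, not_or, hvw, hwv, if_false, hsymm]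
    by_cases hvT : z v ∈ T <;> by_cases hvS : z v ∈ S <;>
      by_cases hwT : z w ∈ T <;> by_cases hwS : z w ∈ S <;>
      first
      | exact absurd hvS (hd _ hvT)
      | exact absurd hwS (hd _ hwT)
      | (by_cases hadj : g.Adj v w <;> (simp [hvT, hvS, hwT, hwS, hadj]; try ring_nf) <;> done)
      | (have hadj : g.Adj v w := h1' hvT hwT hvw; simp [hvT, hvS, hwT, hwS, hadj])
      | (have hadj : ¬ g.Adj v w := h2' hvS hwS; simp [hvT, hvS, hwT, hwS, hadj])
      | (have hadj : g.Adj v w := h3' hvT (by simp [Finset.mem_union, hwT, hwS])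
         simp [hvT, hvS, hwT, hwS, hadj])
      | (have hadj : g.Adj v w := (h3'' hwT (by simp [Finset.mem_union, hvT, hvS])).symm
         simp [hvT, hvS, hwT, hwS, hadj])
      | (have hadj : ¬ g.Adj v w := h4' hvS (by simp [Finset.mem_union, hwT, hwS])
         simp [hvT, hvS, hwT, hwS, hadj])
      | (have hadj : ¬ g.Adj v w := fun h => h4'' hwS (by simp [Finset.mem_union, hvT, hvS]) h.symm
         simp [hvT, hvS, hwT, hwS, hadj])

lemma Hzero_adj_TT (v w : Fin n) (hvT : z v ∈ T) (hwT : z w ∈ T) (hvw : v ≠ w)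
    (hH : Hfun z T S g v w = 0) (hdisj : Disjoint T S) : g.Adj v w := by
  by_contra hadj
  have hadj' : ¬ g.Adj w v := fun h => hadj h.symm
  have hwv : ¬ w = v := fun h => hvw h.symm
  simp [Hfun, mFun, cFun, hvT, hwT, hvw, hwv, hadj, hadj', Finset.mem_union] at hH

lemma Hzero_nadj_SS (v w : Fin n) (hvS : z v ∈ S) (hwS : z w ∈ S)
    (hH : Hfun z T S g v w = 0) (hdisj : Disjoint T S) : ¬ g.Adj v w := by
  intro hadj
  have hvw : v ≠ w := fun h => (h ▸ hadj).ne rfl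
  have hvT : z v ∉ T := fun h => Finset.disjoint_left.mp hdisj h hvS
  have hwT : z w ∉ T := fun h => Finset.disjoint_left.mp hdisj h hwS
  have hadj' : g.Adj w v := hadj.symm
  have hwv : ¬ w = v := fun h => hvw h.symm
  simp [Hfun, mFun, cFun, hvT, hwT, hvS, hwS, hvw, hwv, hadj, hadj', Finset.mem_union] at hH

lemma Hzero_adj_TC (v w : Fin n) (hvT : z v ∈ T) (hwC : z w ∉ T ∪ S)
    (hH : Hfun z T S g v w = 0) (hdisj : Disjoint T S) : g.Adj v w := by
  by_contra hadj
  simp only [Finset.mem_union, not_or] at hwC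
  have hvw : ¬ v = w := fun h => hwC.1 (h ▸ hvT)
  have hwv : ¬ w = v := fun h => hvw h.symm
  have hadj' : ¬ g.Adj w v := fun h => hadj h.symm
  simp [Hfun, mFun, cFun, hvT, hwC.1, hwC.2, hvw, hwv, hadj, hadj', Finset.mem_union] at hH

lemma Hzero_nadj_SC (v w : Fin n) (hvS : z v ∈ S) (hwC : z w ∉ T ∪ S)
    (hH : Hfun z T S g v w = 0) (hdisj : Disjoint T S) : ¬ g.Adj v w := by
  intro hadj
  simp only [Finset.mem_union, not_or] at hwC
  have hvT : z v ∉ T := fun h => Finset.disjoint_left.mp hdisj h hvS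
  have hvw : ¬ v = w := fun h => hwC.2 (h ▸ hvS)
  have hwv : ¬ w = v := fun h => hvw h.symm
  have hadj' : g.Adj w v := hadj.symm
  simp [Hfun, mFun, cFun, hvT, hvS, hwC.1, hwC.2, hvw, hwv, hadj, hadj', Finset.mem_union] at hH

theorem stmt6 {n k : ℕ} (z : Fin n → Fin k) (hz : ∀ i, 0 < blockSize z i)
    (T S : Finset (Fin k)) (hdisj : Disjoint T S) (hne : (T ∪ S).Nonempty)
    (g : SimpleGraph (Fin n)) :
    ((∑ i ∈ T, (addStat z g i : ℤ)) - ∑ i ∈ S, (addStat z g i : ℤ) =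
      2 * ((∑ i ∈ T, blockSize z i).choose 2 : ℤ) +
        ∑ i ∈ T, ∑ j ∈ Finset.univ \ (T ∪ S), (blockSize z i * blockSize z j : ℤ)) ↔
    ((∀ u v : Fin n, z u ∈ T → z v ∈ T → u ≠ v → g.Adj u v) ∧
     (∀ u v : Fin n, z u ∈ S → z v ∈ S → ¬ g.Adj u v) ∧
     (∀ u v : Fin n, z u ∈ T → z v ∉ T ∪ S → g.Adj u v) ∧
     (∀ u v : Fin n, z u ∈ S → z v ∉ T ∪ S → ¬ g.Adj u v)) := by
  classical
  set a : Fin n → ℤ := fun v => if z v ∈ T then 1 else 0 with ha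
  set b : Fin n → ℤ := fun v => if z v ∈ S then 1 else 0 with hb
  set c : Fin n → ℤ := fun v => if z v ∉ T ∪ S then 1 else 0 with hc
  set α : ℤ := ∑ v, a v with hα
  set γ : ℤ := ∑ v, c v with hγ
  -- LHS rewriting
  have hL : (∑ i ∈ T, (addStat z g i : ℤ)) - ∑ i ∈ S, (addStat z g i : ℤ) =
      ∑ v, ∑ w, cFun z T S g v w := by
    rw [sum_addStat, sum_addStat, ← Finset.sum_sub_distrib]
    refine Finset.sum_congr rfl fun v _ => ?_
    rw [← sub_mul, Finset.mul_sum]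
    exact Finset.sum_congr rfl fun w _ => rfl
  -- RHS rewriting
  have hcast : ((∑ i ∈ T, blockSize z i : ℕ) : ℤ) = α := by
    push_cast
    rw [sum_blockSize]
  have hchoose : 2 * ((∑ i ∈ T, blockSize z i).choose 2 : ℤ) = α * α - α := by
    rw [two_choose_two, hcast]
  have hprod : (∑ i ∈ T, ∑ j ∈ Finset.univ \ (T ∪ S), (blockSize z i * blockSize z j : ℤ)) =
      α * γ := by
    rw [← Finset.sum_mul_sum, sum_blockSize, sum_blockSize]
    congr 1
    refine Finset.sum_congr rfl fun v _ => ?_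
    simp [hc, Finset.mem_sdiff]
  have hm : ∀ v, (∑ w, mFun z T S v w) = a v * α - a v + a v * γ := by
    intro v
    unfold mFun
    rw [Finset.sum_add_distrib, Finset.sum_sub_distrib, ← Finset.mul_sum, ← Finset.mul_sum]
    congr 1
    congr 1
    rw [Finset.sum_ite_eq]
    simp
    rfl
  have hM : (∑ v, ∑ w, mFun z T S v w) = α * α - α + α * γ := by
    rw [Finset.sum_congr rfl fun v _ => hm v]
    rw [Finset.sum_add_distrib, Finset.sum_sub_distrib, ← Finset.sum_mul, ← Finset.sum_mul]
  have hR : 2 * ((∑ i ∈ T, blockSize z i).choose 2 : ℤ) +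
        ∑ i ∈ T, ∑ j ∈ Finset.univ \ (T ∪ S), (blockSize z i * blockSize z j : ℤ) =
      ∑ v, ∑ w, mFun z T S v w := by
    rw [hchoose, hprod, hM]
  rw [hL, hR]
  -- reduce to pointwise vanishing of Hfun
  have hswapm : (∑ v, ∑ w, mFun z T S w v) = ∑ v, ∑ w, mFun z T S v w := Finset.sum_comm
  have hswapc : (∑ v, ∑ w, cFun z T S g w v) = ∑ v, ∑ w, cFun z T S g v w := Finset.sum_comm
  have hHsum : (∑ v, ∑ w, Hfun z T S g v w) =
      2 * ((∑ v, ∑ w, mFun z T S v w) - ∑ v, ∑ w, cFun z T S g v w) := by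
    unfold Hfun
    simp only [Finset.sum_add_distrib, Finset.sum_sub_distrib]
    rw [hswapm, hswapc]
    ring
  have hiff : ((∑ v, ∑ w, cFun z T S g v w) = ∑ v, ∑ w, mFun z T S v w) ↔
      ∀ v w, Hfun z T S g v w = 0 := by
    constructor
    · intro h
      have h0 : (∑ v, ∑ w, Hfun z T S g v w) = 0 := by rw [hHsum, h]; ring
      have h1 := (Finset.sum_eq_zero_iff_of_nonneg
        (fun v _ => Finset.sum_nonneg fun w _ => Hfun_nonneg z T S g hdisj v w)).mp h0
      intro v w
      exact (Finset.sum_eq_zero_iff_of_nonneg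
        (fun w _ => Hfun_nonneg z T S g hdisj v w)).mp (h1 v (Finset.mem_univ v)) w
        (Finset.mem_univ w)
    · intro h
      have h0 : (∑ v, ∑ w, Hfun z T S g v w) = 0 :=
        Finset.sum_eq_zero fun v _ => Finset.sum_eq_zero fun w _ => h v w
      rw [hHsum] at h0
      linarith
  rw [hiff]
  constructor
  · intro h
    exact ⟨fun u v hu hv huv => Hzero_adj_TT z T S g u v hu hv huv (h u v) hdisj,
      fun u v hu hv => Hzero_nadj_SS z T S g u v hu hv (h u v) hdisj,
      fun u v hu hv => Hzero_adj_TC z T S g u v hu hv (h u v) hdisj,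
      fun u v hu hv => Hzero_nadj_SC z T S g u v hu hv (h u v) hdisj⟩
  · rintro ⟨h1, h2, h3, h4⟩ v w
    exact Hfun_eq_zero z T S g hdisj h1 h2 h3 h4 v w
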